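/- Let k be a field of characteristic p > 0 and suppose u, v ∈ k⟦x,y⟧ satisfy u = x^p(c₀ + f₀ y + x Λ₀) and v = τ₀(y) y^p + e₀ x + x Ω₀ with c₀, f₀, e₀ ∈ k nonzero, τ₀(y) ∈ k⟦y⟧ a unit power series with constant term τ̄₀, Λ₀, Ω₀ ∈ k⟦x,y⟧ and Ω₀ with zero constant term. Let α ∈ k with α ≠ 0 and τ̄₀ + α e₀ ≠ 0, and let σ : k⟦x,y⟧ → k⟦X,Y⟧ be the unique continuous k-algebra homomorphism with σ(x) = X^p(Y + α) and σ(y) = X. Set c₁ = τ̄₀ + α e₀, f₁ = e₀, e₁ = α^p f₀ / c₁^p, and β = α^p c₀ / c₁^p. Then c₁, f₁, e₁, β are all nonzero, and there exist Λ₁ ∈ k⟦X,Y⟧, a unit power series τ₁(Y) ∈ k⟦Y⟧, and Ω₁ ∈ k⟦X,Y⟧ with zero constant term, such that σ(v) = X^p(c₁ + f₁ Y + X Λ₁) and σ(u) = σ(v)^p · (β + τ₁(Y) Y^p + e₁ X + X Ω₁). (Thus the pair (σ(v), σ(u)/σ(v)^p − β) again satisfies the original hypotheses, with new constants c₁, f₁,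 e₁.) -/

import Mathlib

open MvPowerSeries

namespace Stmt7Aux

variable {k : Type} [Field k]

/-- The projection of a 2-variable power series onto the part not involving
variable `s` (kills every monomial with a positive exponent of `s`). -/
def prFun (s : Fin 2) (F : MvPowerSeries (Fin 2) k) : MvPowerSeries (Fin 2) k :=
  fun d => if d s = 0 then MvPowerSeries.coeff (R := k) d F else 0

lemma coeff_prFun (s : Fin 2) (F : MvPowerSeries (Fin 2) k) (d : Fin 2 →₀ ℕ) :
    MvPowerSeries.coeff (R := k) d (prFun s F)
      = if d s = 0 then MvPowerSeries.coeff (R := k) d F else 0 := rfl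

lemma prFun_one (s : Fin 2) : prFun s (1 : MvPowerSeries (Fin 2) k) = 1 := by
  ext d
  rw [coeff_prFun]
  by_cases hd : d s = 0
  · rw [if_pos hd]
  · rw [if_neg hd, coeff_one, if_neg (fun h => hd (by simp [h]))]

lemma prFun_mul (s : Fin 2) (F G : MvPowerSeries (Fin 2) k) :
    prFun s (F * G) = prFun s F * prFun s G := by
  ext d
  by_cases hd : d s = 0
  · rw [coeff_prFun, if_pos hd, coeff_mul, coeff_mul]
    refine Finset.sum_congr rfl fun q hq => ?_
    rw [Finset.HasAntidiagonal.mem_antidiagonal] at hq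
    have h1 : q.1 s = 0 ∧ q.2 s = 0 := by
      have := congrFun (congrArg (DFunLike.coe) hq) s
      simp only [Finsupp.coe_add, Pi.add_apply] at this
      omega
    rw [coeff_prFun, coeff_prFun, if_pos h1.1, if_pos h1.2]
  · rw [coeff_prFun, if_neg hd, coeff_mul]
    refine (Finset.sum_eq_zero fun q hq => ?_).symm
    rw [Finset.HasAntidiagonal.mem_antidiagonal] at hq
    have h1 : q.1 s ≠ 0 ∨ q.2 s ≠ 0 := by
      have := congrFun (congrArg (DFunLike.coe) hq) s
      simp only [Finsupp.coe_add, Pi.add_apply] at this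
      omega
    rcases h1 with h1 | h1
    · rw [coeff_prFun, if_neg h1, zero_mul]
    · rw [coeff_prFun (F := G), if_neg h1, mul_zero]

lemma prFun_add (s : Fin 2) (F G : MvPowerSeries (Fin 2) k) :
    prFun s (F + G) = prFun s F + prFun s G := by
  ext d
  rw [coeff_prFun, map_add, map_add, coeff_prFun, coeff_prFun]
  split_ifs <;> simp

lemma prFun_zero (s : Fin 2) : prFun s (0 : MvPowerSeries (Fin 2) k) = 0 := by
  ext d
  rw [coeff_prFun]
  simp

/-- `prFun` as a ring homomorphism. -/
def pr (s : Fin 2) : MvPowerSeries (Fin 2) k →+* MvPowerSeries (Fin 2) k where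
  toFun := prFun s
  map_one' := prFun_one s
  map_mul' := prFun_mul s
  map_zero' := prFun_zero s
  map_add' := prFun_add s

lemma coeff_pr (s : Fin 2) (F : MvPowerSeries (Fin 2) k) (d : Fin 2 →₀ ℕ) :
    MvPowerSeries.coeff (R := k) d (pr s F)
      = if d s = 0 then MvPowerSeries.coeff (R := k) d F else 0 := rfl

lemma pr_C (s : Fin 2) (c : k) :
    pr s (MvPowerSeries.C (σ := Fin 2) (R := k) c) = MvPowerSeries.C (σ := Fin 2) (R := k) c := by
  ext d
  rw [coeff_pr]
  by_cases hd : d s = 0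
  · rw [if_pos hd]
  · rw [if_neg hd, coeff_C, if_neg (fun h => hd (by simp [h]))]

lemma pr_X_self (s : Fin 2) : pr s (MvPowerSeries.X s : MvPowerSeries (Fin 2) k) = 0 := by
  ext d
  rw [coeff_pr]
  by_cases hd : d s = 0
  · rw [if_pos hd, coeff_X, if_neg, map_zero]
    intro h
    rw [h] at hd
    simp at hd
  · rw [if_neg hd, map_zero]

lemma pr_X_ne (s t : Fin 2) (h : t ≠ s) :
    pr s (MvPowerSeries.X t : MvPowerSeries (Fin 2) k) = MvPowerSeries.X t := by
  ext d
  rw [coeff_pr]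
  by_cases hd : d s = 0
  · rw [if_pos hd]
  · rw [if_neg hd, coeff_X, if_neg]
    intro hdd
    rw [hdd] at hd
    exact hd (Finsupp.single_eq_of_ne h.symm)

/-- Any series with zero constant term is of the form `X 0 * A + X 1 * B`. -/
lemma exists_decomp (F : MvPowerSeries (Fin 2) k)
    (hF : MvPowerSeries.constantCoeff (σ := Fin 2) (R := k) F = 0) :
    ∃ A B : MvPowerSeries (Fin 2) k,
      F = MvPowerSeries.X 0 * A + MvPowerSeries.X 1 * B := by
  have h1 : (MvPowerSeries.X 0 : MvPowerSeries (Fin 2) k) ∣ F - pr 0 F := by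
    rw [MvPowerSeries.X_dvd_iff]
    intro m hm
    rw [map_sub, coeff_pr, if_pos hm, sub_self]
  have h2 : (MvPowerSeries.X 1 : MvPowerSeries (Fin 2) k) ∣ pr 0 F := by
    rw [MvPowerSeries.X_dvd_iff]
    intro m hm
    rw [coeff_pr]
    by_cases hm0 : m 0 = 0
    · rw [if_pos hm0]
      have : m = 0 := by
        ext i
        fin_cases i
        · exact hm0
        · exact hm
      rw [this]
      exact hF
    · rw [if_neg hm0]
  obtain ⟨A, hA⟩ := h1
  obtain ⟨B, hB⟩ := h2
  exact ⟨A, B, by rw [← hA, ← hB]; ring⟩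

lemma coeff_single_one_mul (s : Fin 2) (F G : MvPowerSeries (Fin 2) k) :
    MvPowerSeries.coeff (R := k) (Finsupp.single s 1) (F * G)
      = MvPowerSeries.coeff (R := k) (Finsupp.single s 1) F * MvPowerSeries.constantCoeff (σ := Fin 2) (R := k) G
        + MvPowerSeries.constantCoeff (σ := Fin 2) (R := k) F
            * MvPowerSeries.coeff (R := k) (Finsupp.single s 1) G := by
  rw [coeff_mul, Finsupp.antidiagonal_single, Finset.sum_map]
  rw [show Finset.HasAntidiagonal.antidiagonal (1 : ℕ) = {(0, 1), (1, 0)} by decide]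
  rw [Finset.sum_pair (by decide)]
  simp only [Function.Embedding.coe_prodMap, Function.Embedding.coeFn_mk, Prod.map_apply,
    Finsupp.single_zero, ← coeff_zero_eq_constantCoeff_apply]
  ring

end Stmt7Aux


/-- The maximal ideal of the two-variable formal power series ring
`k⟦x,y⟧` over a field `k`: the series with zero constant term. -/
noncomputable def psMaxIdeal (k : Type) [Field k] : Ideal (MvPowerSeries (Fin 2) k) :=
  RingHom.ker (MvPowerSeries.constantCoeff (σ := Fin 2) (R := k))

/-- `σ : k⟦x,y⟧ →+* k⟦X,Y⟧` is the substitution homomorphism `x ↦ a`,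
`y ↦ b`: a `k`-algebra homomorphism, continuous for the maximal-adic
topologies, sending the two variables to `a` and `b`.  (Such a continuous
`k`-algebra homomorphism is unique when it exists, namely when `a` and `b`
have zero constant term.) -/
def IsSubstitutionHom (k : Type) [Field k]
    (σ : MvPowerSeries (Fin 2) k →+* MvPowerSeries (Fin 2) k)
    (a b : MvPowerSeries (Fin 2) k) : Prop :=
  (∀ c : k, σ (MvPowerSeries.C (σ := Fin 2) (R := k) c) = MvPowerSeries.C (σ := Fin 2) (R := k) c) ∧
  σ (MvPowerSeries.X 0) = a ∧ σ (MvPowerSeries.X 1) = b ∧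
  ∀ n : ℕ, ∃ m : ℕ, ∀ F ∈ (psMaxIdeal k) ^ m, σ F ∈ (psMaxIdeal k) ^ n

/-- `ε : k⟦T⟧ →+* k⟦X,Y⟧` is the substitution homomorphism `T ↦ w`:
a `k`-algebra homomorphism, continuous for the maximal-adic topologies,
sending `T` to `w`. -/
def IsSubstitutionHom₁ (k : Type) [Field k]
    (ε : PowerSeries k →+* MvPowerSeries (Fin 2) k)
    (w : MvPowerSeries (Fin 2) k) : Prop :=
  (∀ c : k, ε (PowerSeries.C (R := k) c) = MvPowerSeries.C (σ := Fin 2) (R := k) c) ∧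
  ε PowerSeries.X = w ∧
  ∀ n : ℕ, ∃ m : ℕ,
    ∀ F ∈ (RingHom.ker (PowerSeries.constantCoeff (R := k))) ^ m, ε F ∈ (psMaxIdeal k) ^ n

/-- the inductive step of Lemma 3.1 of the paper.
With `u, v` as in the hypotheses, `α ∈ k` with `α ≠ 0` and
`τ̄₀ + α e₀ ≠ 0`, and `σ : k⟦x,y⟧ → k⟦X,Y⟧` the substitution
`x ↦ X^p (Y + α)`, `y ↦ X`, setting `c₁ = τ̄₀ + α e₀`, `f₁ = e₀`,
`e₁ = α^p f₀ / c₁^p` and `β = α^p c₀ / c₁^p`, all of `c₁, f₁, e₁, β` are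
nonzero and `σ(v) = X^p (c₁ + f₁ Y + X Λ₁)`,
`σ(u) = σ(v)^p (β + τ₁(Y) Y^p + e₁ X + X Ω₁)` for suitable `Λ₁`, a unit
series `τ₁(Y) ∈ k⟦Y⟧` and `Ω₁` with zero constant term. -/
theorem stmt7 (k : Type) [Field k] (p : ℕ) (hp : p.Prime) [CharP k p]
    (u v Λ Ω T : MvPowerSeries (Fin 2) k) (c₀ f₀ e₀ : k)
    (hc : c₀ ≠ 0) (hf : f₀ ≠ 0) (he : e₀ ≠ 0)
    -- `T` is a unit power series in `y` alone (`τ₀(y)`):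
    (hTy : ∀ d : Fin 2 →₀ ℕ, d 0 ≠ 0 → MvPowerSeries.coeff (R := k) d T = 0)
    (hTu : MvPowerSeries.constantCoeff (σ := Fin 2) (R := k) T ≠ 0)
    (hΩ : MvPowerSeries.constantCoeff (σ := Fin 2) (R := k) Ω = 0)
    -- `u = x^p (c₀ + f₀ y + x Λ₀)`:
    (hu : u = (MvPowerSeries.X 0) ^ p *
      (MvPowerSeries.C (σ := Fin 2) (R := k) c₀ + MvPowerSeries.C (σ := Fin 2) (R := k) f₀ * MvPowerSeries.X 1
        + MvPowerSeries.X 0 * Λ))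
    -- `v = τ₀(y) y^p + e₀ x + x Ω₀`:
    (hv : v = T * (MvPowerSeries.X 1) ^ p
      + MvPowerSeries.C (σ := Fin 2) (R := k) e₀ * MvPowerSeries.X 0 + MvPowerSeries.X 0 * Ω)
    (α : k) (hα : α ≠ 0)
    (hα2 : MvPowerSeries.constantCoeff (σ := Fin 2) (R := k) T + α * e₀ ≠ 0)
    (σ : MvPowerSeries (Fin 2) k →+* MvPowerSeries (Fin 2) k)
    (hσ : IsSubstitutionHom k σ
      ((MvPowerSeries.X 0) ^ p * (MvPowerSeries.X 1 + MvPowerSeries.C (σ := Fin 2) (R := k) α))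
      (MvPowerSeries.X 0))
    (c₁ f₁ e₁ β : k)
    (hc₁ : c₁ = MvPowerSeries.constantCoeff (σ := Fin 2) (R := k) T + α * e₀)
    (hf₁ : f₁ = e₀) (he₁ : e₁ = α ^ p * f₀ / c₁ ^ p)
    (hβ : β = α ^ p * c₀ / c₁ ^ p) :
    c₁ ≠ 0 ∧ f₁ ≠ 0 ∧ e₁ ≠ 0 ∧ β ≠ 0 ∧
    ∃ Λ₁ T₁ Ω₁ : MvPowerSeries (Fin 2) k,
      -- `T₁` is a unit power series in the second variable `Y` alone:
      (∀ d : Fin 2 →₀ ℕ, d 0 ≠ 0 → MvPowerSeries.coeff (R := k) d T₁ = 0) ∧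
      MvPowerSeries.constantCoeff (σ := Fin 2) (R := k) T₁ ≠ 0 ∧
      MvPowerSeries.constantCoeff (σ := Fin 2) (R := k) Ω₁ = 0 ∧
      σ v = (MvPowerSeries.X 0) ^ p *
        (MvPowerSeries.C (σ := Fin 2) (R := k) c₁ + MvPowerSeries.C (σ := Fin 2) (R := k) f₁ * MvPowerSeries.X 1
          + MvPowerSeries.X 0 * Λ₁) ∧
      σ u = (σ v) ^ p *
        (MvPowerSeries.C (σ := Fin 2) (R := k) β + T₁ * (MvPowerSeries.X 1) ^ p
          + MvPowerSeries.C (σ := Fin 2) (R := k) e₁ * MvPowerSeries.X 0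
          + MvPowerSeries.X 0 * Ω₁) := by
  classical
  obtain ⟨hσC, hσx, hσy, -⟩ := hσ
  haveI : Fact p.Prime := ⟨hp⟩
  haveI hCharR : CharP (MvPowerSeries (Fin 2) k) p :=
    charP_of_injective_ringHom (f := MvPowerSeries.C (σ := Fin 2) (R := k))
      (fun a b hab => by
        simpa using congrArg (MvPowerSeries.constantCoeff (σ := Fin 2) (R := k)) hab) p
  have hc₁0 : c₁ ≠ 0 := hc₁ ▸ hα2
  have hc₁p : c₁ ^ p ≠ 0 := pow_ne_zero _ hc₁0
  have hf₁0 : f₁ ≠ 0 := hf₁ ▸ he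
  have he₁0 : e₁ ≠ 0 := by
    rw [he₁]; exact div_ne_zero (mul_ne_zero (pow_ne_zero _ hα) hf) hc₁p
  have hβ0 : β ≠ 0 := by
    rw [hβ]; exact div_ne_zero (mul_ne_zero (pow_ne_zero _ hα) hc) hc₁p
  -- decompositions of `T` and `Ω`
  obtain ⟨AT, BT, hT⟩ := Stmt7Aux.exists_decomp
    (T - MvPowerSeries.C (σ := Fin 2) (R := k) (MvPowerSeries.constantCoeff (σ := Fin 2) (R := k) T)) (by simp)
  obtain ⟨AO, BO, hO⟩ := Stmt7Aux.exists_decomp Ω hΩ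
  have hσT : σ T = MvPowerSeries.C (σ := Fin 2) (R := k) (MvPowerSeries.constantCoeff (σ := Fin 2) (R := k) T)
      + ((MvPowerSeries.X 0 ^ p * (MvPowerSeries.X 1 + MvPowerSeries.C (σ := Fin 2) (R := k) α)) * σ AT
        + MvPowerSeries.X 0 * σ BT) := by
    have hT' : T = MvPowerSeries.C (σ := Fin 2) (R := k) (MvPowerSeries.constantCoeff (σ := Fin 2) (R := k) T)
        + (MvPowerSeries.X 0 * AT + MvPowerSeries.X 1 * BT) := by linear_combination hT
    rw [show σ T = σ (MvPowerSeries.C (σ := Fin 2) (R := k) (MvPowerSeries.constantCoeff (σ := Fin 2) (R := k) T)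
        + (MvPowerSeries.X 0 * AT + MvPowerSeries.X 1 * BT)) from by rw [← hT'],
      map_add, map_add, map_mul, map_mul, hσC, hσx, hσy]
  have hσΩ : σ Ω = (MvPowerSeries.X 0 ^ p * (MvPowerSeries.X 1 + MvPowerSeries.C (σ := Fin 2) (R := k) α)) * σ AO
      + MvPowerSeries.X 0 * σ BO := by
    rw [show σ Ω = σ (MvPowerSeries.X 0 * AO + MvPowerSeries.X 1 * BO) from by rw [← hO],
      map_add, map_mul, map_mul, hσx, hσy]
  obtain ⟨q, hqdef⟩ : ∃ q : ℕ, q = p - 1 := ⟨p - 1, rfl⟩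
  have hq : p = q + 1 := by rw [hqdef]; exact (Nat.succ_pred_eq_of_pos hp.pos).symm
  obtain ⟨Λ₁, hΛ₁def⟩ : ∃ Λ₁ : MvPowerSeries (Fin 2) k, Λ₁ =
      MvPowerSeries.X 0 ^ q * (MvPowerSeries.X 1 + MvPowerSeries.C (σ := Fin 2) (R := k) α) * σ AT + σ BT
        + (MvPowerSeries.X 1 + MvPowerSeries.C (σ := Fin 2) (R := k) α)
          * (MvPowerSeries.X 0 ^ q * (MvPowerSeries.X 1 + MvPowerSeries.C (σ := Fin 2) (R := k) α) * σ AO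
            + σ BO) := ⟨_, rfl⟩
  have hCc₁ : MvPowerSeries.C (σ := Fin 2) (R := k) c₁
      = MvPowerSeries.C (σ := Fin 2) (R := k) (MvPowerSeries.constantCoeff (σ := Fin 2) (R := k) T)
        + MvPowerSeries.C (σ := Fin 2) (R := k) α * MvPowerSeries.C (σ := Fin 2) (R := k) e₀ := by
    rw [hc₁, map_add, map_mul]
  have hσv : σ v = MvPowerSeries.X 0 ^ p *
      (MvPowerSeries.C (σ := Fin 2) (R := k) c₁ + MvPowerSeries.C (σ := Fin 2) (R := k) f₁ * MvPowerSeries.X 1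
        + MvPowerSeries.X 0 * Λ₁) := by
    rw [hv]
    simp only [map_add, map_mul, map_pow, hσC, hσx, hσy]
    rw [hσT, hσΩ, hCc₁, hf₁, hΛ₁def, hq]
    ring
  obtain ⟨G, hGdef⟩ : ∃ G : MvPowerSeries (Fin 2) k, G =
      MvPowerSeries.C (σ := Fin 2) (R := k) c₁ + MvPowerSeries.C (σ := Fin 2) (R := k) f₁ * MvPowerSeries.X 1
        + MvPowerSeries.X 0 * Λ₁ := ⟨_, rfl⟩
  have hσvG : σ v = MvPowerSeries.X 0 ^ p * G := by rw [hGdef]; exact hσv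
  have hGconst : MvPowerSeries.constantCoeff (σ := Fin 2) (R := k) G = c₁ := by
    rw [hGdef]
    simp
  have hGne : MvPowerSeries.constantCoeff (σ := Fin 2) (R := k) G ≠ 0 := by rw [hGconst]; exact hc₁0
  obtain ⟨P, hPdef⟩ : ∃ P : MvPowerSeries (Fin 2) k, P =
      MvPowerSeries.C (σ := Fin 2) (R := k) c₀ + MvPowerSeries.C (σ := Fin 2) (R := k) f₀ * MvPowerSeries.X 0
        + MvPowerSeries.X 0 ^ p * (MvPowerSeries.X 1 + MvPowerSeries.C (σ := Fin 2) (R := k) α) * σ Λ :=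
    ⟨_, rfl⟩
  have hσu0 : σ u = MvPowerSeries.X 0 ^ (p * p) *
      ((MvPowerSeries.X 1 + MvPowerSeries.C (σ := Fin 2) (R := k) α) ^ p * P) := by
    rw [hu]
    simp only [map_add, map_mul, map_pow, hσC, hσx, hσy]
    rw [hPdef, mul_pow, ← pow_mul]
    ring
  have hfrob : (MvPowerSeries.X 1 + MvPowerSeries.C (σ := Fin 2) (R := k) α) ^ p
      = MvPowerSeries.X 1 ^ p + MvPowerSeries.C (σ := Fin 2) (R := k) (α ^ p) := by
    rw [add_pow_char, ← map_pow]
  obtain ⟨H, hHdef⟩ : ∃ H : MvPowerSeries (Fin 2) k, H =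
      MvPowerSeries.C (σ := Fin 2) (R := k) (c₁ ^ p)
        + MvPowerSeries.C (σ := Fin 2) (R := k) (f₁ ^ p) * MvPowerSeries.X 1 ^ p := ⟨_, rfl⟩
  have hGp : G ^ p = H + MvPowerSeries.X 0 ^ p * Λ₁ ^ p := by
    rw [hGdef, hHdef, add_pow_char, add_pow_char, mul_pow, mul_pow, ← map_pow, ← map_pow]
  obtain ⟨W, hWdef⟩ : ∃ W : MvPowerSeries (Fin 2) k, W =
      (MvPowerSeries.X 1 ^ p + MvPowerSeries.C (σ := Fin 2) (R := k) (α ^ p)) * P * (G⁻¹) ^ p := ⟨_, rfl⟩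
  have hWG : W * G ^ p = (MvPowerSeries.X 1 ^ p + MvPowerSeries.C (σ := Fin 2) (R := k) (α ^ p)) * P := by
    have h1 : (G⁻¹) ^ p * G ^ p = 1 := by
      rw [← mul_pow, MvPowerSeries.inv_mul_cancel _ hGne, one_pow]
    calc W * G ^ p
        = (MvPowerSeries.X 1 ^ p + MvPowerSeries.C (σ := Fin 2) (R := k) (α ^ p)) * P
            * ((G⁻¹) ^ p * G ^ p) := by rw [hWdef]; ring
      _ = _ := by rw [h1, mul_one]
  have hσu : σ u = σ v ^ p * W := by
    rw [hσu0, hσvG, mul_pow, ← pow_mul]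
    calc MvPowerSeries.X 0 ^ (p * p)
          * ((MvPowerSeries.X 1 + MvPowerSeries.C (σ := Fin 2) (R := k) α) ^ p * P)
        = MvPowerSeries.X 0 ^ (p * p)
          * ((MvPowerSeries.X 1 ^ p + MvPowerSeries.C (σ := Fin 2) (R := k) (α ^ p)) * P) := by rw [hfrob]
      _ = MvPowerSeries.X 0 ^ (p * p) * (W * G ^ p) := by rw [hWG]
      _ = MvPowerSeries.X 0 ^ (p * p) * G ^ p * W := by ring
  -- projection onto the `X 0`-free part
  have hprX0 : Stmt7Aux.pr 0 (MvPowerSeries.X 0 : MvPowerSeries (Fin 2) k) = 0 :=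
    Stmt7Aux.pr_X_self 0
  have hprX1 : Stmt7Aux.pr 0 (MvPowerSeries.X 1 : MvPowerSeries (Fin 2) k) = MvPowerSeries.X 1 :=
    Stmt7Aux.pr_X_ne 0 1 (by decide)
  have hprP : Stmt7Aux.pr 0 P = MvPowerSeries.C (σ := Fin 2) (R := k) c₀ := by
    rw [hPdef]
    simp only [map_add, map_mul, map_pow, Stmt7Aux.pr_C, hprX0, hprX1]
    rw [zero_pow hp.ne_zero]
    ring
  have hprG : Stmt7Aux.pr 0 G = MvPowerSeries.C (σ := Fin 2) (R := k) c₁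
      + MvPowerSeries.C (σ := Fin 2) (R := k) f₁ * MvPowerSeries.X 1 := by
    rw [hGdef]
    simp only [map_add, map_mul, Stmt7Aux.pr_C, hprX0, hprX1]
    ring
  have hHfr : (MvPowerSeries.C (σ := Fin 2) (R := k) c₁ + MvPowerSeries.C (σ := Fin 2) (R := k) f₁ * MvPowerSeries.X 1) ^ p
      = H := by
    rw [hHdef, add_pow_char, mul_pow, ← map_pow, ← map_pow]
  obtain ⟨A, hAdef⟩ : ∃ A : MvPowerSeries (Fin 2) k, A = Stmt7Aux.pr 0 W := ⟨_, rfl⟩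
  have hdiamond : A * H = (MvPowerSeries.X 1 ^ p + MvPowerSeries.C (σ := Fin 2) (R := k) (α ^ p))
      * MvPowerSeries.C (σ := Fin 2) (R := k) c₀ := by
    have h2 := congrArg (Stmt7Aux.pr 0) hWG
    rw [map_mul, map_pow, hprG, hHfr] at h2
    rw [map_mul, map_add, map_pow, hprX1, Stmt7Aux.pr_C, hprP] at h2
    rw [hAdef]
    exact h2
  have hHconst : MvPowerSeries.constantCoeff (σ := Fin 2) (R := k) H = c₁ ^ p := by
    rw [hHdef]
    simp [zero_pow hp.ne_zero]
  have hHne : MvPowerSeries.constantCoeff (σ := Fin 2) (R := k) H ≠ 0 := by rw [hHconst]; exact hc₁p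
  have hHinv : H * H⁻¹ = 1 := MvPowerSeries.mul_inv_cancel _ hHne
  have hβc : β * c₁ ^ p = α ^ p * c₀ := by rw [hβ]; field_simp
  have hγeq : (c₀ - β * f₁ ^ p) * c₁ ^ p
      = c₀ * (MvPowerSeries.constantCoeff (σ := Fin 2) (R := k) T) ^ p := by
    have h3 : MvPowerSeries.constantCoeff (σ := Fin 2) (R := k) T = c₁ - α * e₀ := by rw [hc₁]; ring
    rw [h3, sub_pow_char, hf₁]
    linear_combination (-(e₀ ^ p)) * hβc
  have hγ0 : c₀ - β * f₁ ^ p ≠ 0 := by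
    intro h
    rw [h, zero_mul] at hγeq
    exact (mul_ne_zero hc (pow_ne_zero _ hTu)) hγeq.symm
  have hABH : (A - MvPowerSeries.C (σ := Fin 2) (R := k) β) * H
      = MvPowerSeries.C (σ := Fin 2) (R := k) (c₀ - β * f₁ ^ p) * MvPowerSeries.X 1 ^ p := by
    have hβC : MvPowerSeries.C (σ := Fin 2) (R := k) β * MvPowerSeries.C (σ := Fin 2) (R := k) (c₁ ^ p)
        = MvPowerSeries.C (σ := Fin 2) (R := k) (α ^ p) * MvPowerSeries.C (σ := Fin 2) (R := k) c₀ := by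
      rw [← map_mul, ← map_mul, hβc]
    rw [map_sub, map_mul]
    linear_combination hdiamond - hβC - MvPowerSeries.C (σ := Fin 2) (R := k) β * hHdef
  obtain ⟨τ₁, hτ₁def⟩ : ∃ τ₁ : MvPowerSeries (Fin 2) k,
      τ₁ = MvPowerSeries.C (σ := Fin 2) (R := k) (c₀ - β * f₁ ^ p) * H⁻¹ := ⟨_, rfl⟩
  have hAβ : A - MvPowerSeries.C (σ := Fin 2) (R := k) β = τ₁ * MvPowerSeries.X 1 ^ p := by
    calc A - MvPowerSeries.C (σ := Fin 2) (R := k) β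
        = (A - MvPowerSeries.C (σ := Fin 2) (R := k) β) * (H * H⁻¹) := by rw [hHinv, mul_one]
      _ = ((A - MvPowerSeries.C (σ := Fin 2) (R := k) β) * H) * H⁻¹ := by ring
      _ = (MvPowerSeries.C (σ := Fin 2) (R := k) (c₀ - β * f₁ ^ p) * MvPowerSeries.X 1 ^ p) * H⁻¹ := by
          rw [hABH]
      _ = τ₁ * MvPowerSeries.X 1 ^ p := by rw [hτ₁def]; ring
  have hprH : Stmt7Aux.pr 0 H = H := by
    rw [hHdef]
    simp only [map_add, map_mul, map_pow, Stmt7Aux.pr_C, hprX1]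
  have hprHinv : Stmt7Aux.pr 0 H⁻¹ = H⁻¹ := by
    have h4 := congrArg (Stmt7Aux.pr 0) hHinv
    rw [map_mul, map_one, hprH] at h4
    calc Stmt7Aux.pr 0 H⁻¹ = Stmt7Aux.pr 0 H⁻¹ * (H * H⁻¹) := by rw [hHinv, mul_one]
      _ = (H * Stmt7Aux.pr 0 H⁻¹) * H⁻¹ := by ring
      _ = H⁻¹ := by rw [h4, one_mul]
  have hprτ : Stmt7Aux.pr 0 τ₁ = τ₁ := by
    rw [hτ₁def, map_mul, Stmt7Aux.pr_C, hprHinv]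
  have hτ₁Y : ∀ d : Fin 2 →₀ ℕ, d 0 ≠ 0 → MvPowerSeries.coeff (R := k) d τ₁ = 0 := by
    intro d hd
    rw [← hprτ, Stmt7Aux.coeff_pr, if_neg hd]
  have hτ₁u : MvPowerSeries.constantCoeff (σ := Fin 2) (R := k) τ₁ ≠ 0 := by
    have hτH : τ₁ * H = MvPowerSeries.C (σ := Fin 2) (R := k) (c₀ - β * f₁ ^ p) := by
      calc τ₁ * H = MvPowerSeries.C (σ := Fin 2) (R := k) (c₀ - β * f₁ ^ p) * (H * H⁻¹) := by
            rw [hτ₁def]; ring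
        _ = _ := by rw [hHinv, mul_one]
    have h5 := congrArg (MvPowerSeries.constantCoeff (σ := Fin 2) (R := k)) hτH
    rw [map_mul, hHconst, MvPowerSeries.constantCoeff_C] at h5
    intro h0
    rw [h0, zero_mul] at h5
    exact hγ0 h5.symm
  -- the `X`-divisible part of `W`
  obtain ⟨B, hB⟩ : (MvPowerSeries.X 0 : MvPowerSeries (Fin 2) k) ∣ W - A := by
    rw [MvPowerSeries.X_dvd_iff]
    intro m hm
    rw [map_sub, hAdef, Stmt7Aux.coeff_pr, if_pos hm, sub_self]
  -- coefficient extraction at the monomial `x`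
  have hs01 : (Finsupp.single (0 : Fin 2) 1) 0 = 1 := Finsupp.single_eq_same
  have hs01ne : (Finsupp.single (0 : Fin 2) 1) ≠ 0 := by
    intro h
    rw [h] at hs01
    simp at hs01
  have hlamC : ∀ a : k, MvPowerSeries.coeff (R := k) (Finsupp.single 0 1) (MvPowerSeries.C (σ := Fin 2) (R := k) a)
      = 0 := by
    intro a
    rw [MvPowerSeries.coeff_C, if_neg hs01ne]
  have hlamX1p : MvPowerSeries.coeff (R := k) (Finsupp.single 0 1)
      ((MvPowerSeries.X 1 : MvPowerSeries (Fin 2) k) ^ p) = 0 := by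
    refine MvPowerSeries.X_pow_dvd_iff.mp dvd_rfl _ ?_
    rw [Finsupp.single_eq_of_ne (by decide)]
    exact hp.pos
  have hlamX0p : ∀ Z : MvPowerSeries (Fin 2) k,
      (MvPowerSeries.X 0 : MvPowerSeries (Fin 2) k) ^ p ∣ Z →
      MvPowerSeries.coeff (R := k) (Finsupp.single 0 1) Z = 0 := by
    intro Z hZ
    refine MvPowerSeries.X_pow_dvd_iff.mp hZ _ ?_
    rw [hs01]
    exact hp.one_lt
  have hlamX0 : MvPowerSeries.coeff (R := k) (Finsupp.single 0 1)
      (MvPowerSeries.X 0 : MvPowerSeries (Fin 2) k) = 1 := by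
    rw [MvPowerSeries.coeff_X, if_pos rfl]
  have hconstGp : MvPowerSeries.constantCoeff (σ := Fin 2) (R := k) (G ^ p) = c₁ ^ p := by
    rw [map_pow, hGconst]
  have hlamGp : MvPowerSeries.coeff (R := k) (Finsupp.single 0 1) (G ^ p) = 0 := by
    rw [hGp, map_add, hHdef, map_add, hlamC, MvPowerSeries.coeff_C_mul, hlamX1p,
      hlamX0p _ (Dvd.intro _ rfl)]
    ring
  have hlamF1 : MvPowerSeries.coeff (R := k) (Finsupp.single 0 1)
      ((MvPowerSeries.X 1 : MvPowerSeries (Fin 2) k) ^ p + MvPowerSeries.C (σ := Fin 2) (R := k) (α ^ p))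
      = 0 := by
    rw [map_add, hlamX1p, hlamC, add_zero]
  have hconstF1 : MvPowerSeries.constantCoeff (σ := Fin 2) (R := k)
      ((MvPowerSeries.X 1 : MvPowerSeries (Fin 2) k) ^ p + MvPowerSeries.C (σ := Fin 2) (R := k) (α ^ p))
      = α ^ p := by
    simp [zero_pow hp.ne_zero]
  have hlamP : MvPowerSeries.coeff (R := k) (Finsupp.single 0 1) P = f₀ := by
    rw [hPdef, map_add, map_add, hlamC, MvPowerSeries.coeff_C_mul, hlamX0,
      hlamX0p _ ⟨(MvPowerSeries.X 1 + MvPowerSeries.C (σ := Fin 2) (R := k) α) * σ Λ, by ring⟩]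
    ring
  have hconstP : MvPowerSeries.constantCoeff (σ := Fin 2) (R := k) P = c₀ := by
    rw [hPdef]
    simp [zero_pow hp.ne_zero]
  have hlamW : MvPowerSeries.coeff (R := k) (Finsupp.single 0 1) W * c₁ ^ p = α ^ p * f₀ := by
    have h6 := congrArg (MvPowerSeries.coeff (R := k) (Finsupp.single 0 1)) hWG
    rw [Stmt7Aux.coeff_single_one_mul, Stmt7Aux.coeff_single_one_mul, hconstGp, hlamGp, hlamF1,
      hconstF1, hlamP, hconstP] at h6
    linear_combination h6
  have hlamA : MvPowerSeries.coeff (R := k) (Finsupp.single 0 1) A = 0 := by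
    rw [hAdef, Stmt7Aux.coeff_pr, if_neg]
    rw [hs01]
    exact one_ne_zero
  have hconstB : MvPowerSeries.constantCoeff (σ := Fin 2) (R := k) B = e₁ := by
    have h7 : MvPowerSeries.coeff (R := k) (Finsupp.single 0 1) (MvPowerSeries.X 0 * B)
        = MvPowerSeries.constantCoeff (σ := Fin 2) (R := k) B := by
      rw [Stmt7Aux.coeff_single_one_mul, hlamX0, MvPowerSeries.constantCoeff_X, one_mul,
        zero_mul, add_zero]
    have h8 := congrArg (MvPowerSeries.coeff (R := k) (Finsupp.single 0 1)) hB
    rw [map_sub, hlamA, sub_zero, h7] at h8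
    rw [he₁, eq_div_iff hc₁p, ← h8]
    exact hlamW
  have hconstΩ₁ : MvPowerSeries.constantCoeff (σ := Fin 2) (R := k) (B - MvPowerSeries.C (σ := Fin 2) (R := k) e₁)
      = 0 := by
    rw [map_sub, hconstB, MvPowerSeries.constantCoeff_C, sub_self]
  have hWfin : W = MvPowerSeries.C (σ := Fin 2) (R := k) β + τ₁ * MvPowerSeries.X 1 ^ p
      + MvPowerSeries.C (σ := Fin 2) (R := k) e₁ * MvPowerSeries.X 0
      + MvPowerSeries.X 0 * (B - MvPowerSeries.C (σ := Fin 2) (R := k) e₁) := by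
    linear_combination hAβ + hB
  exact ⟨hc₁0, hf₁0, he₁0, hβ0, Λ₁, τ₁, B - MvPowerSeries.C (σ := Fin 2) (R := k) e₁,
    hτ₁Y, hτ₁u, hconstΩ₁, hσv, by rw [hσu, hWfin]⟩
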